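/- Let T be an LTS in which every transition is labeled either by a nonempty finite sequence over an action set A or by ε. Let split(T) be the LTS obtained from T by replacing every transition s →⟨a1,…,an⟩ s' by a chain of transitions s →a1 u1 →a2 ⋯ u_{n-1} →an s' through fresh intermediate states, and replacing every transition s →ε s' by s →τ s'. Then a finite word w over A labels a τ-abstracted path of split(T) from its initial state if and only if w is a prefix of some concatenation ζ1 ⊕ ⋯ ⊕ ζk, where ⟨ζ1, …, ζk⟩ is the label sequence of a path of T from its initial state (a label ε contributing the empty sequence). In particular, the splitting operation does not change the trace semantics: the order of individual actions is preserved. -/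
import Mathlib


/-!
STATEMENT 10: splitting sequence-labeled transitions into chains of
single-action transitions preserves the trace semantics.
-/

/-- A labeled transition system over labels `L`. -/
structure LTS (L : Type) where
  S : Type
  init : S
  step : S → L → S → Prop

/-- `T.Path s w s'` : the finite word `w` labels a path of `T` from `s` to `s'`. -/
inductive LTS.Path {L : Type} (T : LTS L) : T.S → List L → T.S → Prop
  | nil (s : T.S) : T.Path s [] s
  | cons {s : T.S} {a : L} {s' : T.S} {w : List L} {s'' : T.S} :
      T.step s a s' → T.Path s' w s'' → T.Path s (a :: w) s''

/-- `WeakPath T s w s'` : the word `w` is the sequence of non-τ labels along a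
path from `s` to `s'` (labels `Option A`, with `none` playing the role of τ). -/
inductive WeakPath {A : Type} (T : LTS (Option A)) : T.S → List A → T.S → Prop
  | nil (s : T.S) : WeakPath T s [] s
  | tau {s s' : T.S} {w : List A} {s'' : T.S} :
      T.step s none s' → WeakPath T s' w s'' → WeakPath T s w s''
  | act {s : T.S} {a : A} {s' : T.S} {w : List A} {s'' : T.S} :
      T.step s (some a) s' → WeakPath T s' w s'' → WeakPath T s (a :: w) s''

/-- Target of a chain step: if no sends remain we return to an original state,
otherwise we move to a fresh intermediate state. -/
def mkT {A : Type} {S : Type} (rest : List A) (t : S) : S ⊕ (List A × S) :=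
  match rest with
  | [] => Sum.inl t
  | _ => Sum.inr (rest, t)

/-- The transitions of `split T`: a transition of `T` labeled `⟨a1, …, an⟩`
(`n ≥ 1`) is replaced by a chain of transitions labeled `a1, …, an` through
fresh intermediate states, and a transition labeled `ε` becomes a τ-transition. -/
inductive SplitStep {A : Type} (T : LTS (List A)) :
    (T.S ⊕ (List A × T.S)) → Option A → (T.S ⊕ (List A × T.S)) → Prop
  | tauS {s s' : T.S} :
      T.step s [] s' → SplitStep T (Sum.inl s) none (Sum.inl s')
  | start {s : T.S} {a : A} {rest : List A} {s' : T.S} :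
      T.step s (a :: rest) s' → SplitStep T (Sum.inl s) (some a) (mkT rest s')
  | cont {a : A} {rest : List A} {t : T.S} :
      SplitStep T (Sum.inr (a :: rest, t)) (some a) (mkT rest t)

/-- The splitting operation on an LTS whose labels are finite sequences over `A`
(the empty sequence playing the role of ε). -/
def split {A : Type} (T : LTS (List A)) : LTS (Option A) :=
  ⟨T.S ⊕ (List A × T.S), Sum.inl T.init, SplitStep T⟩



section
variable {A : Type} (T : LTS (List A))

def SplitInv : (T.S ⊕ (List A × T.S)) → List A → Prop
  | Sum.inl s, w => ∃ ζs s', T.Path s ζs s' ∧ w <+: ζs.flatten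
  | Sum.inr (rest, t), w => ∃ ζs s', T.Path t ζs s' ∧ w <+: rest ++ ζs.flatten

lemma splitInv_mkT {rest : List A} {t : T.S} {w : List A} :
    SplitInv T (mkT rest t) w ↔ ∃ ζs s', T.Path t ζs s' ∧ w <+: rest ++ ζs.flatten := by
  cases rest with
  | nil => simp [mkT, SplitInv]
  | cons a r => simp [mkT, SplitInv]

lemma fwd : ∀ {st w u}, WeakPath (split T) st w u → SplitInv T st w := by
  intro st w u h
  induction h with
  | nil s =>
    cases s with
    | inl s => exact ⟨[], s, LTS.Path.nil s, List.nil_prefix⟩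
    | inr p => exact ⟨[], p.2, LTS.Path.nil p.2, List.nil_prefix⟩
  | tau hs _ ih =>
    cases hs with
    | tauS h =>
      obtain ⟨ζs, s'', hp, hpre⟩ := ih
      exact ⟨[] :: ζs, s'', LTS.Path.cons h hp, by simpa using hpre⟩
  | act hs _ ih =>
    cases hs with
    | start h =>
      obtain ⟨ζs, s'', hp, hpre⟩ := (splitInv_mkT T).mp ih
      refine ⟨_ :: ζs, s'', LTS.Path.cons h hp, ?_⟩
      simp only [List.flatten_cons, List.cons_append]
      exact List.cons_prefix_cons.mpr ⟨rfl, hpre⟩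
    | cont =>
      obtain ⟨ζs, s'', hp, hpre⟩ := (splitInv_mkT T).mp ih
      refine ⟨ζs, s'', hp, ?_⟩
      simp only [List.cons_append]
      exact List.cons_prefix_cons.mpr ⟨rfl, hpre⟩

lemma wp_append {B : Type} {U : LTS (Option B)} :
    ∀ {s w u w' v}, WeakPath U s w u → WeakPath U u w' v → WeakPath U s (w ++ w') v := by
  intro s w u w' v h h'
  induction h with
  | nil => simpa
  | tau hs _ ih => exact WeakPath.tau hs (ih h')
  | act hs _ ih => exact WeakPath.act hs (ih h')

lemma chainFull : ∀ (rest : List A) (t : T.S),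
    WeakPath (split T) (mkT rest t) rest (Sum.inl t) := by
  intro rest
  induction rest with
  | nil => intro t; exact WeakPath.nil _
  | cons a r ih => intro t; exact WeakPath.act SplitStep.cont (ih t)

lemma stepFull {s : T.S} {ζ : List A} {s' : T.S} (h : T.step s ζ s') :
    WeakPath (split T) (Sum.inl s) ζ (Sum.inl s') := by
  cases ζ with
  | nil => exact WeakPath.tau (SplitStep.tauS h) (WeakPath.nil _)
  | cons a r => exact WeakPath.act (SplitStep.start h) (chainFull T r s')

lemma chainPartial : ∀ (rest : List A) (t : T.S) (w : List A), w <+: rest →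
    ∃ u, WeakPath (split T) (mkT rest t) w u := by
  intro rest
  induction rest with
  | nil =>
    intro t w hw
    rw [List.prefix_nil] at hw; subst hw
    exact ⟨_, WeakPath.nil _⟩
  | cons a r ih =>
    intro t w hw
    cases w with
    | nil => exact ⟨_, WeakPath.nil _⟩
    | cons b w' =>
      obtain ⟨hb, hw'⟩ := (List.cons_prefix_cons).mp hw
      subst hb
      obtain ⟨u, hu⟩ := ih t w' hw'
      exact ⟨u, WeakPath.act SplitStep.cont hu⟩

lemma bwd : ∀ {s ζs s'}, T.Path s ζs s' → ∀ w, w <+: ζs.flatten →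
    ∃ u, WeakPath (split T) (Sum.inl s) w u := by
  intro s ζs s' h
  induction h with
  | nil s =>
    intro w hw
    simp only [List.flatten_nil, List.prefix_nil] at hw; subst hw
    exact ⟨_, WeakPath.nil _⟩
  | @cons s ζ s' ζs s'' hs _ ih =>
    intro w hw
    simp only [List.flatten_cons] at hw
    rcases List.prefix_or_prefix_of_prefix hw (List.prefix_append ζ ζs.flatten) with h1 | h1
    · cases ζ with
      | nil =>
        rw [List.prefix_nil] at h1; subst h1
        exact ⟨_, WeakPath.nil _⟩
      | cons a r =>
        cases w with
        | nil => exact ⟨_, WeakPath.nil _⟩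
        | cons b w' =>
          obtain ⟨hb, hw'⟩ := (List.cons_prefix_cons).mp h1
          subst hb
          obtain ⟨u, hu⟩ := chainPartial T r s' w' hw'
          exact ⟨u, WeakPath.act (SplitStep.start hs) hu⟩
    · obtain ⟨w', rfl⟩ := h1
      have hw' : w' <+: ζs.flatten := by
        have := hw
        rwa [List.prefix_append_right_inj] at this
      obtain ⟨u, hu⟩ := ih w' hw'
      exact ⟨u, wp_append (stepFull T hs) hu⟩

end

/-- a finite word `w` over `A` labels a τ-abstracted path of
`split T` from its initial state iff `w` is a prefix of some concatenation
`ζ1 ⊕ ⋯ ⊕ ζk` where `⟨ζ1, …, ζk⟩` is the label sequence of a path of `T` from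
its initial state. -/
theorem split_weak_words {A : Type} (T : LTS (List A)) (w : List A) :
    (∃ t, WeakPath (split T) (split T).init w t) ↔
      (∃ (ζs : List (List A)) (s' : T.S), T.Path T.init ζs s' ∧ w <+: ζs.flatten) := by
  constructor
  · rintro ⟨t, h⟩
    exact fwd T h
  · rintro ⟨ζs, s', hp, hpre⟩
    exact bwd T hp w hpre
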